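/- For any ζ = (ζ_1,…,ζ_d) ∈ ℂ^d ∖ {1_d} with |ζ_j| = 1 for j = 1,…,d, one has 𝒫_V(z,λ) ≢ 𝒫_V(ζ⊙z,λ), where ζ⊙z = (ζ_1z_1,…,ζ_dz_d). -/

import Mathlib

open MeasureTheory Polynomial

noncomputable section

/-- Multivariate Laurent polynomials in `d` variables over `ℂ`. -/
abbrev MvL (d : ℕ) : Type := AddMonoidAlgebra ℂ (Fin d →₀ ℤ)

/-- Evaluation of a Laurent polynomial at a point `z ∈ (ℂ^*)^d`. -/
noncomputable def evalMvL {d : ℕ} (z : Fin d → ℂ) (p : MvL d) : ℂ :=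
  Finsupp.sum p.coeff fun n c => c * ∏ j, z j ^ (n j)

/-- Evaluation of an element of `(MvL d)[λ]` at `(z, lam)`. -/
noncomputable def evalP {d : ℕ} (z : Fin d → ℂ) (lam : ℂ) (P : Polynomial (MvL d)) : ℂ :=
  P.sum fun m a => evalMvL z a * lam ^ m

/-- `det (𝒜(z) - λ I)` as a Laurent polynomial in `z` and polynomial in `λ`. -/
noncomputable def detP {d Q : ℕ} (M : Matrix (Fin Q) (Fin Q) (MvL d)) : Polynomial (MvL d) :=
  Matrix.det (Matrix.of fun i j => Polynomial.C (M i j) - if i = j then Polynomial.X else 0)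



/-- The unique Floquet extension: for `u` on the fundamental domain `W = ∏ [0, q j)`,
`extPer q hq z u m` is `ũ(m)` where `ũ(n + q j • e j) = z j * ũ(n)`. -/
noncomputable def extPer {d : ℕ} (q : Fin d → ℕ) (hq : ∀ j, 0 < q j) (z : Fin d → ℂ)
    (u : ((j : Fin d) → Fin (q j)) → ℂ) (m : Fin d → ℤ) : ℂ :=
  (∏ j, z j ^ (m j / (q j : ℤ))) *
    u (fun j => ⟨(m j % (q j : ℤ)).toNat, by
      have h0 : (0:ℤ) < (q j : ℤ) := by exact_mod_cast hq j
      have h1 : 0 ≤ m j % (q j : ℤ) := Int.emod_nonneg _ h0.ne'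
      have h2 : m j % (q j : ℤ) < (q j : ℤ) := Int.emod_lt_of_pos _ h0
      omega⟩)

/-- The Floquet matrix `𝒟_V(z)` of `Δ + V` with boundary condition `u(n + q j e j) = z j u(n)`. -/
noncomputable def DVmat {d : ℕ} (q : Fin d → ℕ) (hq : ∀ j, 0 < q j)
    (V : (Fin d → ℤ) → ℝ) (z : Fin d → ℂ) :
    Matrix ((j : Fin d) → Fin (q j)) ((j : Fin d) → Fin (q j)) ℂ :=
  Matrix.of fun n n' =>
    (∑ j, (extPer q hq z (Pi.single n' 1) (fun i => ((n i : ℕ) : ℤ) + if i = j then 1 else 0)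
        + extPer q hq z (Pi.single n' 1) (fun i => ((n i : ℕ) : ℤ) - if i = j then 1 else 0)))
    + (V (fun i => ((n i : ℕ) : ℤ)) : ℂ) * (if n = n' then (1:ℂ) else 0)

/-- `𝒫_V(z, λ) = det (𝒟_V(z) - λ I)`. -/
noncomputable def PVfun {d : ℕ} (q : Fin d → ℕ) (hq : ∀ j, 0 < q j)
    (V : (Fin d → ℤ) → ℝ) (z : Fin d → ℂ) (lam : ℂ) : ℂ :=
  Matrix.det (DVmat q hq V z - lam • (1 : Matrix _ _ ℂ))

/-- Discrete Fourier transform of the periodic potential `V`. -/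
noncomputable def Vhat {d : ℕ} (q : Fin d → ℕ) (V : (Fin d → ℤ) → ℝ) (m : Fin d → ℤ) : ℂ :=
  (((∏ j, q j : ℕ) : ℂ))⁻¹ * ∑ n : ((j : Fin d) → Fin (q j)),
    (V (fun i => ((n i : ℕ) : ℤ)) : ℂ) *
      Complex.exp (-(2 * (Real.pi : ℂ) * Complex.I) *
        ∑ j, (m j : ℂ) * ((n j : ℕ) : ℂ) / ((q j : ℕ) : ℂ))

/-- The diagonal matrix `B₀(z)` with entries `∑ j (ρ^j_{n j} z j + (ρ^j_{n j} z j)⁻¹)`. -/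
noncomputable def B0mat {d : ℕ} (q : Fin d → ℕ) (z : Fin d → ℂ) :
    Matrix ((j : Fin d) → Fin (q j)) ((j : Fin d) → Fin (q j)) ℂ :=
  Matrix.diagonal fun n => ∑ j,
    (Complex.exp (2 * (Real.pi : ℂ) * Complex.I * ((n j : ℕ) : ℂ) / ((q j : ℕ) : ℂ)) * z j
      + (Complex.exp (2 * (Real.pi : ℂ) * Complex.I * ((n j : ℕ) : ℂ) / ((q j : ℕ) : ℂ)) * z j)⁻¹)

/-- The matrix `B_V` with entries `V̂(n - n')`. -/
noncomputable def BVmat {d : ℕ} (q : Fin d → ℕ) (V : (Fin d → ℤ) → ℝ) :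
    Matrix ((j : Fin d) → Fin (q j)) ((j : Fin d) → Fin (q j)) ℂ :=
  Matrix.of fun n n' => Vhat q V (fun i => ((n i : ℕ) : ℤ) - ((n' i : ℕ) : ℤ))

/-- `h(z, λ) = ∏_{n ∈ W} ((∑ j ρ^j_{n j} z j) - λ)` as a function. -/
noncomputable def hFun {d : ℕ} (q : Fin d → ℕ) (z : Fin d → ℂ) (lam : ℂ) : ℂ :=
  ∏ n : ((j : Fin d) → Fin (q j)),
    ((∑ j, Complex.exp (2 * (Real.pi : ℂ) * Complex.I * ((n j : ℕ) : ℂ) / ((q j : ℕ) : ℂ)) * z j)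
      - lam)

/-- The Laurent monomial `c * z j`. -/
noncomputable def zVar {d : ℕ} (j : Fin d) (c : ℂ) : MvL d :=
  AddMonoidAlgebra.single (Finsupp.single j (1:ℤ)) c

/-- `h(z, λ)` as a Laurent polynomial in `z` and polynomial in `λ`. -/
noncomputable def hPoly {d : ℕ} (q : Fin d → ℕ) : Polynomial (MvL d) :=
  ∏ n : ((j : Fin d) → Fin (q j)),
    (Polynomial.C (∑ j, zVar j
        (Complex.exp (2 * (Real.pi : ℂ) * Complex.I * ((n j : ℕ) : ℂ) / ((q j : ℕ) : ℂ))))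
      - Polynomial.X)



end

section AuxProof

open Finset

variable {d : ℕ} (q : Fin d → ℕ) (hq : ∀ j, 0 < q j)

/-- The reduction-mod point used in `extPer`. -/
def ptQ (m : Fin d → ℤ) : (j : Fin d) → Fin (q j) :=
  fun j => ⟨(m j % (q j : ℤ)).toNat, by
    have h0 : (0:ℤ) < (q j : ℤ) := by exact_mod_cast hq j
    have h1 : 0 ≤ m j % (q j : ℤ) := Int.emod_nonneg _ h0.ne'
    have h2 : m j % (q j : ℤ) < (q j : ℤ) := Int.emod_lt_of_pos _ h0
    omega⟩

lemma extPer_eq (z : Fin d → ℂ) (u : ((j : Fin d) → Fin (q j)) → ℂ) (m : Fin d → ℤ) :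
    extPer q hq z u m = (∏ j, z j ^ (m j / (q j : ℤ))) * u (ptQ q hq m) := rfl

lemma ptQ_cast (m : Fin d → ℤ) (j : Fin d) :
    ((ptQ q hq m j : ℕ) : ℤ) = m j % (q j : ℤ) := by
  simp only [ptQ]
  exact Int.toNat_of_nonneg (Int.emod_nonneg _ (by exact_mod_cast (hq j).ne'))

lemma extPer_dilate_single (j : Fin d) (c : Fin d → ℂ) (w : ℂ) (hw : w ≠ 0)
    (n' : (j : Fin d) → Fin (q j)) (m : Fin d → ℤ) :
    extPer q hq (fun i => (if i = j then w ^ (q j) else 1) * c i) (Pi.single n' 1) m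
      = w ^ (m j - ((n' j : ℕ) : ℤ)) * extPer q hq c (Pi.single n' 1) m := by
  rw [extPer_eq, extPer_eq]
  by_cases hP : ptQ q hq m = n'
  · subst hP
    rw [Pi.single_eq_same]
    have h1 : ∀ i : Fin d, ((if i = j then w ^ (q j) else 1) * c i) ^ (m i / (q i : ℤ))
        = (if i = j then w ^ (q j) else 1) ^ (m i / (q i : ℤ)) * c i ^ (m i / (q i : ℤ)) :=
      fun i => mul_zpow _ _ _
    rw [Finset.prod_congr rfl (fun i _ => h1 i), Finset.prod_mul_distrib]
    have h2 : (∏ i, (if i = j then w ^ (q j) else 1) ^ (m i / (q i : ℤ)))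
        = (w ^ (q j)) ^ (m j / (q j : ℤ)) := by
      rw [show (w ^ (q j)) ^ (m j / (q j : ℤ))
          = (if j = j then w ^ (q j) else 1) ^ (m j / (q j : ℤ)) by rw [if_pos rfl]]
      exact Fintype.prod_eq_single j (fun i hi => by simp only [if_neg hi, one_zpow])
    rw [h2]
    have h3 : (w ^ (q j)) ^ (m j / (q j : ℤ)) = w ^ (m j - ((ptQ q hq m j : ℕ) : ℤ)) := by
      rw [ptQ_cast q hq, ← zpow_natCast w (q j), ← zpow_mul]
      congr 1
      have := Int.mul_ediv_add_emod (m j) (q j : ℤ)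
      omega
    rw [h3]; ring
  · rw [Pi.single_eq_of_ne hP, mul_zero, mul_zero, mul_zero]

variable (V : (Fin d → ℤ) → ℝ) (j : Fin d)

noncomputable def FmatA (c : Fin d → ℂ) :
    Matrix ((j : Fin d) → Fin (q j)) ((j : Fin d) → Fin (q j)) ℂ :=
  Matrix.of fun n n' =>
    extPer q hq c (Pi.single n' 1) (fun i => ((n i : ℕ) : ℤ) + if i = j then 1 else 0)

noncomputable def BmatA (c : Fin d → ℂ) :
    Matrix ((j : Fin d) → Fin (q j)) ((j : Fin d) → Fin (q j)) ℂ :=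
  Matrix.of fun n n' =>
    extPer q hq c (Pi.single n' 1) (fun i => ((n i : ℕ) : ℤ) - if i = j then 1 else 0)

noncomputable def RmatA (c : Fin d → ℂ) :
    Matrix ((j : Fin d) → Fin (q j)) ((j : Fin d) → Fin (q j)) ℂ :=
  Matrix.of fun n n' =>
    (∑ i ∈ Finset.univ.erase j,
      (extPer q hq c (Pi.single n' 1) (fun i' => ((n i' : ℕ) : ℤ) + if i' = i then 1 else 0)
        + extPer q hq c (Pi.single n' 1) (fun i' => ((n i' : ℕ) : ℤ) - if i' = i then 1 else 0)))
    + (V (fun i => ((n i : ℕ) : ℤ)) : ℂ) * (if n = n' then (1:ℂ) else 0)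

lemma conj_entry (c : Fin d → ℂ) (w : ℂ) (hw : w ≠ 0)
    (n n' : (j : Fin d) → Fin (q j)) :
    w ^ (-((n j : ℕ) : ℤ)) * DVmat q hq V (fun i => (if i = j then w ^ (q j) else 1) * c i) n n'
        * w ^ (((n' j : ℕ) : ℤ))
      = w * FmatA q hq j c n n' + w⁻¹ * BmatA q hq j c n n' + RmatA q hq V j c n n' := by
  have hzz : ∀ a b : ℤ, w ^ a * w ^ b = w ^ (a + b) := fun a b => (zpow_add₀ hw a b).symm
  simp only [DVmat, FmatA, BmatA, RmatA, Matrix.of_apply]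
  have key : ∀ i : Fin d,
      w ^ (-((n j : ℕ) : ℤ)) *
        ((extPer q hq (fun i' => (if i' = j then w ^ (q j) else 1) * c i') (Pi.single n' 1)
            (fun i' => ((n i' : ℕ) : ℤ) + if i' = i then 1 else 0)
          + extPer q hq (fun i' => (if i' = j then w ^ (q j) else 1) * c i') (Pi.single n' 1)
            (fun i' => ((n i' : ℕ) : ℤ) - if i' = i then 1 else 0)) * w ^ (((n' j : ℕ) : ℤ)))
      = w ^ (if j = i then (1:ℤ) else 0) *
          extPer q hq c (Pi.single n' 1) (fun i' => ((n i' : ℕ) : ℤ) + if i' = i then 1 else 0)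
        + w ^ (if j = i then (-1:ℤ) else 0) *
          extPer q hq c (Pi.single n' 1) (fun i' => ((n i' : ℕ) : ℤ) - if i' = i then 1 else 0) := by
    intro i
    rw [extPer_dilate_single q hq j c w hw, extPer_dilate_single q hq j c w hw]
    set Ef := extPer q hq c (Pi.single n' 1) (fun i' => ((n i' : ℕ) : ℤ) + if i' = i then 1 else 0)
      with hEf
    set Eb := extPer q hq c (Pi.single n' 1) (fun i' => ((n i' : ℕ) : ℤ) - if i' = i then 1 else 0)
      with hEb
    have c1 : w ^ (-((n j : ℕ) : ℤ)) *
        w ^ ((((n j : ℕ) : ℤ) + (if j = i then (1:ℤ) else 0)) - ((n' j : ℕ) : ℤ))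
        * w ^ (((n' j : ℕ) : ℤ)) = w ^ (if j = i then (1:ℤ) else 0) := by
      rw [hzz, hzz]; congr 1; ring
    have c2 : w ^ (-((n j : ℕ) : ℤ)) *
        w ^ ((((n j : ℕ) : ℤ) - (if j = i then (1:ℤ) else 0)) - ((n' j : ℕ) : ℤ))
        * w ^ (((n' j : ℕ) : ℤ)) = w ^ (if j = i then (-1:ℤ) else 0) := by
      rw [hzz, hzz]; congr 1
      by_cases h : j = i <;> simp [h] <;> ring
    linear_combination Ef * c1 + Eb * c2
  rw [mul_assoc, add_mul, mul_add, Finset.sum_mul, Finset.mul_sum]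
  have hsum1 : (∑ i : Fin d, w ^ (-((n j : ℕ) : ℤ)) *
        ((extPer q hq (fun i' => (if i' = j then w ^ (q j) else 1) * c i') (Pi.single n' 1)
            (fun i' => ((n i' : ℕ) : ℤ) + if i' = i then 1 else 0)
          + extPer q hq (fun i' => (if i' = j then w ^ (q j) else 1) * c i') (Pi.single n' 1)
            (fun i' => ((n i' : ℕ) : ℤ) - if i' = i then 1 else 0)) * w ^ (((n' j : ℕ) : ℤ))))
      = ∑ i : Fin d, (w ^ (if j = i then (1:ℤ) else 0) *
          extPer q hq c (Pi.single n' 1) (fun i' => ((n i' : ℕ) : ℤ) + if i' = i then 1 else 0)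
        + w ^ (if j = i then (-1:ℤ) else 0) *
          extPer q hq c (Pi.single n' 1) (fun i' => ((n i' : ℕ) : ℤ) - if i' = i then 1 else 0)) :=
    Finset.sum_congr rfl (fun i _ => key i)
  rw [hsum1, ← Finset.add_sum_erase _ _ (Finset.mem_univ j)]
  have hjj1 : (if j = j then (1:ℤ) else 0) = 1 := if_pos rfl
  have hjj2 : (if j = j then (-1:ℤ) else 0) = -1 := if_pos rfl
  rw [hjj1, hjj2, zpow_one, zpow_neg_one]
  have hsum2 : (∑ i ∈ Finset.univ.erase j, (w ^ (if j = i then (1:ℤ) else 0) *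
          extPer q hq c (Pi.single n' 1) (fun i' => ((n i' : ℕ) : ℤ) + if i' = i then 1 else 0)
        + w ^ (if j = i then (-1:ℤ) else 0) *
          extPer q hq c (Pi.single n' 1) (fun i' => ((n i' : ℕ) : ℤ) - if i' = i then 1 else 0)))
      = ∑ i ∈ Finset.univ.erase j,
        (extPer q hq c (Pi.single n' 1) (fun i' => ((n i' : ℕ) : ℤ) + if i' = i then 1 else 0)
          + extPer q hq c (Pi.single n' 1) (fun i' => ((n i' : ℕ) : ℤ) - if i' = i then 1 else 0)) := by
    refine Finset.sum_congr rfl (fun i hi => ?_)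
    have hji : ¬ (j = i) := fun h => (Finset.mem_erase.mp hi).1 h.symm
    rw [if_neg hji, if_neg hji, zpow_zero, one_mul, one_mul]
  rw [hsum2]
  have hV : w ^ (-((n j : ℕ) : ℤ)) * (((V (fun i => ((n i : ℕ) : ℤ)) : ℂ)
      * (if n = n' then (1:ℂ) else 0)) * w ^ (((n' j : ℕ) : ℤ)))
      = (V (fun i => ((n i : ℕ) : ℤ)) : ℂ) * (if n = n' then (1:ℂ) else 0) := by
    by_cases h : n = n'
    · subst h
      have c0 : w ^ (-((n j : ℕ) : ℤ)) * w ^ (((n j : ℕ) : ℤ)) = 1 := by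
        rw [hzz]; simp
      rw [if_pos rfl]
      linear_combination ((V (fun i => ((n i : ℕ) : ℤ)) : ℂ)) * c0
    · rw [if_neg h]; ring
  rw [hV]
  ring

lemma PVfun_zw (c : Fin d → ℂ) (w : ℂ) (hw : w ≠ 0) (lam : ℂ) :
    PVfun q hq V (fun i => (if i = j then w ^ (q j) else 1) * c i) lam
      = Matrix.det (w • FmatA q hq j c + w⁻¹ • BmatA q hq j c + RmatA q hq V j c
          - lam • (1 : Matrix _ _ ℂ)) := by
  have hdet : Matrix.det ((Matrix.diagonal (fun n : (j : Fin d) → Fin (q j) => w ^ (-((n j : ℕ) : ℤ))))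
      * (DVmat q hq V (fun i => (if i = j then w ^ (q j) else 1) * c i) - lam • 1)
      * (Matrix.diagonal (fun n : (j : Fin d) → Fin (q j) => w ^ (((n j : ℕ) : ℤ)))))
      = PVfun q hq V (fun i => (if i = j then w ^ (q j) else 1) * c i) lam := by
    rw [Matrix.det_mul, Matrix.det_mul, Matrix.det_diagonal, Matrix.det_diagonal]
    have hone : (∏ n : (j : Fin d) → Fin (q j), w ^ (-((n j : ℕ) : ℤ)))
        * (∏ n : (j : Fin d) → Fin (q j), w ^ (((n j : ℕ) : ℤ))) = 1 := by
      rw [← Finset.prod_mul_distrib]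
      apply Finset.prod_eq_one
      intro n _
      rw [← zpow_add₀ hw]; simp
    unfold PVfun
    linear_combination (Matrix.det (DVmat q hq V (fun i => (if i = j then w ^ (q j) else 1) * c i)
      - lam • (1 : Matrix _ _ ℂ))) * hone
  rw [← hdet]
  congr 1
  ext n n'
  rw [Matrix.mul_diagonal, Matrix.diagonal_mul]
  have hD := conj_entry q hq V j c w hw n n'
  simp only [Matrix.sub_apply, Matrix.smul_apply, Matrix.add_apply, Matrix.one_apply, smul_eq_mul]
  have hL : w ^ (-((n j : ℕ) : ℤ)) * (lam * (if n = n' then (1:ℂ) else 0)) * w ^ (((n' j : ℕ) : ℤ))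
      = lam * (if n = n' then (1:ℂ) else 0) := by
    by_cases h : n = n'
    · subst h; rw [if_pos rfl]
      have c0 : w ^ (-((n j : ℕ) : ℤ)) * w ^ (((n j : ℕ) : ℤ)) = 1 := by
        rw [← zpow_add₀ hw]; simp
      linear_combination lam * c0
    · rw [if_neg h]; ring
  linear_combination hD - hL

lemma FmatA_eq_one (c : Fin d → ℂ) (hcj : c j = 1) :
    FmatA q hq j c = FmatA q hq j (fun _ => 1) := by
  ext n n'
  simp only [FmatA, Matrix.of_apply, extPer_eq]
  congr 1
  have h1 : ∀ (cc : Fin d → ℂ), cc j = 1 →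
      (∏ i, cc i ^ (((((n i : ℕ) : ℤ)) + if i = j then 1 else 0) / (q i : ℤ))) = 1 := by
    intro cc hcc
    apply Finset.prod_eq_one
    intro i _
    by_cases h : i = j
    · subst h; rw [hcc, one_zpow]
    · rw [if_neg h, add_zero, Int.ediv_eq_zero_of_lt (by positivity)
        (by exact_mod_cast (n i).isLt), zpow_zero]
  rw [h1 c hcj, h1 (fun _ => 1) rfl]

lemma BmatA_eq_one (c : Fin d → ℂ) (hcj : c j = 1) :
    BmatA q hq j c = BmatA q hq j (fun _ => 1) := by
  ext n n'
  simp only [BmatA, Matrix.of_apply, extPer_eq]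
  congr 1
  have h1 : ∀ (cc : Fin d → ℂ), cc j = 1 →
      (∏ i, cc i ^ (((((n i : ℕ) : ℤ)) - if i = j then 1 else 0) / (q i : ℤ))) = 1 := by
    intro cc hcc
    apply Finset.prod_eq_one
    intro i _
    by_cases h : i = j
    · subst h; rw [hcc, one_zpow]
    · rw [if_neg h, sub_zero, Int.ediv_eq_zero_of_lt (by positivity)
        (by exact_mod_cast (n i).isLt), zpow_zero]
  rw [h1 c hcj, h1 (fun _ => 1) rfl]

lemma FmatA_one_mulVec (v : ((j : Fin d) → Fin (q j)) → ℂ) :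
    (FmatA q hq j (fun _ => 1)).mulVec v
      = fun n => v (ptQ q hq (fun i => ((n i : ℕ) : ℤ) + if i = j then 1 else 0)) := by
  funext n
  simp only [Matrix.mulVec, dotProduct, FmatA, Matrix.of_apply, extPer_eq, one_zpow,
    Finset.prod_const_one, one_mul]
  simp [Pi.single_apply, ite_mul]

lemma det_F0_sub_one :
    (FmatA q hq j (fun _ => 1) - 1).det = 0 := by
  haveI : ∀ i, Nonempty (Fin (q i)) := fun i => ⟨⟨0, hq i⟩⟩
  rw [← Matrix.exists_mulVec_eq_zero_iff]
  refine ⟨fun _ => 1, ?_, ?_⟩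
  · intro h
    have := congr_fun h (fun i => ⟨0, hq i⟩)
    simpa using this
  · rw [Matrix.sub_mulVec, Matrix.one_mulVec, FmatA_one_mulVec]
    funext n; simp

lemma phi_iterate (k : ℕ) (n : (j : Fin d) → Fin (q j)) (i : Fin d) :
    (((fun n => ptQ q hq (fun i => ((n i : ℕ) : ℤ) + if i = j then 1 else 0))^[k] n) i : ℕ)
      = (((n i : ℕ)) + (if i = j then k else 0)) % q i := by
  induction k generalizing n with
  | zero => simp [Nat.mod_eq_of_lt (n i).isLt]
  | succ k ih =>
    rw [Function.iterate_succ_apply']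
    show (((((((fun n => ptQ q hq (fun i => ((n i : ℕ) : ℤ) + if i = j then 1 else 0))^[k] n) i : ℕ) : ℤ)
        + if i = j then 1 else 0) % ((q i : ℕ) : ℤ)).toNat) = _
    rw [ih n]
    by_cases h : i = j
    · subst h
      simp only [if_pos rfl]
      calc ((((((n i : ℕ) + k) % q i : ℕ) : ℤ) + 1) % ((q i : ℕ) : ℤ)).toNat
          = (((((n i : ℕ) + k) % q i + 1 : ℕ) : ℤ) % (((q i : ℕ) : ℕ) : ℤ)).toNat := by
            push_cast; ring_nf
        _ = ((((n i : ℕ) + k) % q i + 1) % q i : ℕ) := by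
            rw [← Int.natCast_mod, Int.toNat_natCast]
        _ = ((n i : ℕ) + (k + 1)) % q i := by
            rw [Nat.mod_add_mod]; ring_nf
    · simp only [if_neg h, add_zero]
      rw [Nat.mod_eq_of_lt (n i).isLt]
      have : (((n i : ℕ) : ℤ) % ((q i : ℕ) : ℤ)) = ((n i : ℕ) : ℤ) :=
        Int.emod_eq_of_lt (by positivity) (by exact_mod_cast (n i).isLt)
      rw [this, Int.toNat_natCast]

lemma omega_pow_eq_one (ω : ℂ)
    (h : (ω • FmatA q hq j (fun _ => 1) - 1).det = 0) : ω ^ (q j) = 1 := by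
  obtain ⟨v, hv0, hv⟩ := Matrix.exists_mulVec_eq_zero_iff.mpr h
  set φ : ((i : Fin d) → Fin (q i)) → ((i : Fin d) → Fin (q i)) :=
    fun n => ptQ q hq (fun i => ((n i : ℕ) : ℤ) + if i = j then 1 else 0) with hφ
  have hrec : ∀ n, v n = ω * v (φ n) := by
    intro n
    have h0 := congr_fun hv n
    rw [Matrix.sub_mulVec, Matrix.one_mulVec, Matrix.smul_mulVec,
      FmatA_one_mulVec] at h0
    simp only [Pi.sub_apply, Pi.smul_apply, smul_eq_mul, Pi.zero_apply] at h0
    have := sub_eq_zero.mp h0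
    rw [← this]
  have hiter : ∀ (k : ℕ) (n), v n = ω ^ k * v (φ^[k] n) := by
    intro k
    induction k with
    | zero => intro n; simp
    | succ k ih =>
      intro n
      rw [Function.iterate_succ_apply, hrec n, ih (φ n), pow_succ]
      ring
  have hφq : φ^[q j] = id := by
    funext n
    funext i
    apply Fin.ext
    rw [show ((φ^[q j] n) i : ℕ) = (((n i : ℕ)) + (if i = j then q j else 0)) % q i from
      phi_iterate q hq j (q j) n i]
    by_cases h' : i = j
    · subst h'
      rw [if_pos rfl, Nat.add_mod_right, Nat.mod_eq_of_lt (n i).isLt]; rfl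
    · rw [if_neg h', add_zero, Nat.mod_eq_of_lt (n i).isLt]; rfl
  obtain ⟨n₀, hn₀⟩ := Function.ne_iff.mp hv0
  have hfin := hiter (q j) n₀
  rw [hφq, id_eq] at hfin
  have h1 : (ω ^ (q j) - 1) * v n₀ = 0 := by linear_combination -hfin
  rcases mul_eq_zero.mp h1 with h2 | h2
  · exact sub_eq_zero.mp h2
  · exact absurd h2 (by simpa using hn₀)

end AuxProof

theorem statement13
    {d : ℕ} (hd : 0 < d) (q : Fin d → ℕ) (hq : ∀ j, 0 < q j)
    (V : (Fin d → ℤ) → ℝ)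
    (hper : ∀ (n : Fin d → ℤ) (j : Fin d),
      V (fun i => n i + if i = j then (q j : ℤ) else 0) = V n)
 :
    ∀ ζ : Fin d → ℂ, (∀ j, ‖ζ j‖ = 1) → ζ ≠ (fun _ => 1) →
      ∃ (z : Fin d → ℂ) (lam : ℂ), (∀ j, z j ≠ 0) ∧
        PVfun q hq V z lam ≠ PVfun q hq V (fun j => ζ j * z j) lam := by
  intro ζ habs hne
  by_contra hcon
  push_neg at hcon
  obtain ⟨j, hj⟩ := Function.ne_iff.mp hne
  have hζ0 : ζ j ≠ 0 := by
    intro h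
    have := habs j
    rw [h] at this
    simp at this
  obtain ⟨ω, hω⟩ := IsAlgClosed.exists_pow_nat_eq (ζ j) (hq j)
  have hω0 : ω ≠ 0 := by
    intro h
    rw [h, zero_pow (hq j).ne'] at hω
    exact hζ0 hω.symm
  set c₁ : Fin d → ℂ := fun _ => 1 with hc₁
  set c₂ : Fin d → ℂ := fun i => if i = j then 1 else ζ i with hc₂
  set F0 := FmatA q hq j (fun _ => 1) with hF0
  set B0 := BmatA q hq j (fun _ => 1) with hB0
  set R1 := RmatA q hq V j c₁ with hR1
  set R2 := RmatA q hq V j c₂ with hR2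
  set g₁ : ℂ → ℂ := fun ε => Matrix.det ((F0 - 1) + ε • R1 + (ε^2) • B0) with hg₁def
  set g₂ : ℂ → ℂ := fun ε => Matrix.det ((ω • F0 - 1) + ε • R2 + (ω⁻¹ * ε^2) • B0) with hg₂def
  have hkey : ∀ ε : ℂ, ε ≠ 0 → g₁ ε = g₂ ε := by
    intro ε hε
    have hw : (ε⁻¹ : ℂ) ≠ 0 := inv_ne_zero hε
    have hznz : ∀ i, (fun i => (if i = j then (ε⁻¹) ^ (q j) else 1) * c₁ i) i ≠ 0 := by
      intro i
      by_cases h : i = j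
      · subst h
        simp only [if_pos rfl, hc₁, mul_one]
        exact pow_ne_zero _ hw
      · simp [hc₁, h]
    have happ := hcon (fun i => (if i = j then (ε⁻¹) ^ (q j) else 1) * c₁ i) ε⁻¹ hznz
    have hzeq : (fun i => ζ i * ((if i = j then (ε⁻¹) ^ (q j) else 1) * c₁ i))
        = (fun i => (if i = j then (ω * ε⁻¹) ^ (q j) else 1) * c₂ i) := by
      funext i
      by_cases h : i = j
      · subst h
        simp [hc₁, hc₂, mul_pow, hω]
      · simp only [if_neg h, hc₁, hc₂]
        ring
    rw [hzeq] at happ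
    rw [PVfun_zw q hq V j c₁ ε⁻¹ hw ε⁻¹,
      PVfun_zw q hq V j c₂ (ω * ε⁻¹) (mul_ne_zero hω0 hw) ε⁻¹] at happ
    rw [FmatA_eq_one q hq j c₁ rfl, BmatA_eq_one q hq j c₁ rfl,
      FmatA_eq_one q hq j c₂ (if_pos rfl), BmatA_eq_one q hq j c₂ (if_pos rfl)] at happ
    have hM1 : ε⁻¹ • F0 + (ε⁻¹)⁻¹ • B0 + R1 - ε⁻¹ • (1 : Matrix _ _ ℂ)
        = ε⁻¹ • ((F0 - 1) + ε • R1 + (ε^2) • B0) := by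
      ext n n'
      simp only [Matrix.add_apply, Matrix.sub_apply, Matrix.smul_apply, Matrix.one_apply,
        smul_eq_mul, inv_inv]
      linear_combination (-(R1 n n' + ε * B0 n n')) * (inv_mul_cancel₀ hε)
    have hM2 : (ω * ε⁻¹) • F0 + (ω * ε⁻¹)⁻¹ • B0 + R2 - ε⁻¹ • (1 : Matrix _ _ ℂ)
        = ε⁻¹ • ((ω • F0 - 1) + ε • R2 + (ω⁻¹ * ε^2) • B0) := by
      ext n n'
      simp only [Matrix.add_apply, Matrix.sub_apply, Matrix.smul_apply, Matrix.one_apply,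
        smul_eq_mul, mul_inv, inv_inv]
      have hωc : ω⁻¹ * ω = 1 := inv_mul_cancel₀ hω0
      have hεc : ε⁻¹ * ε = 1 := inv_mul_cancel₀ hε
      linear_combination (-(R2 n n' + ω⁻¹ * ε * B0 n n')) * hεc
    rw [hM1, hM2, Matrix.det_smul, Matrix.det_smul] at happ
    exact mul_left_cancel₀ (pow_ne_zero _ hw) happ
  -- limits
  have hg1c : Continuous g₁ := by
    apply Continuous.matrix_det
    exact (continuous_const.add (continuous_id.smul continuous_const)).add
      ((continuous_pow 2).smul continuous_const)
  have hg2c : Continuous g₂ := by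
    apply Continuous.matrix_det
    exact (continuous_const.add (continuous_id.smul continuous_const)).add
      ((continuous_const.mul (continuous_pow 2)).smul continuous_const)
  set u : ℕ → ℂ := fun n => (((1 : ℝ) / ((n : ℝ) + 1) : ℝ) : ℂ) with hu
  have hu0 : ∀ n, u n ≠ 0 := by
    intro n
    simp only [hu, ne_eq, Complex.ofReal_eq_zero]
    positivity
  have hut : Filter.Tendsto u Filter.atTop (nhds 0) := by
    rw [hu, show ((0 : ℂ)) = ((0 : ℝ) : ℂ) by norm_num]
    exact (Complex.continuous_ofReal.tendsto 0).comp tendsto_one_div_add_atTop_nhds_zero_nat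
  have heq0 : g₁ 0 = g₂ 0 := by
    refine tendsto_nhds_unique ((hg1c.tendsto 0).comp hut) ?_
    have h2 : Filter.Tendsto (fun n => g₂ (u n)) Filter.atTop (nhds (g₂ 0)) :=
      (hg2c.tendsto 0).comp hut
    exact h2.congr (fun n => (hkey (u n) (hu0 n)).symm)
  have hg10 : g₁ 0 = (F0 - 1).det := by
    rw [hg₁def]
    norm_num
  have hg20 : g₂ 0 = (ω • F0 - 1).det := by
    rw [hg₂def]
    norm_num
  have hdet2 : (ω • F0 - 1).det = 0 := by
    rw [← hg20, ← heq0, hg10, hF0]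
    exact det_F0_sub_one q hq j
  have : ω ^ (q j) = 1 := omega_pow_eq_one q hq j ω (by rw [← hF0]; exact hdet2)
  rw [hω] at this
  exact hj this
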